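/- (Convergence to the invariant measure via coupling) Let E be a complete separable (Polish) metric space with its Borel σ-algebra, let κ be a Markov kernel from E to E, and let μ be an invariant probability measure for κ (i.e. the measure μκ := ∫ κ(x,·) μ(dx) equals μ). Let ν be a probability measure on E, let π be a coupling of μ and ν, and let Π be a Markov kernel from E × E to E × E such that for every (x,y) ∈ E × E, Π((x,y), ·) is a coupling of κ(x,·) and κ(y,·). Then sup_{A measurable} |νκ(A) − μ(A)| ≤ ∫_{E×E} Π((x,y), {(u,v) : u ≠ v}) dπ(x,y), where νκ(A) := ∫ κ(y,A) ν(dy). -/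

import Mathlib

open MeasureTheory ProbabilityTheory

/-- **Convergence to the invariant measure via coupling.** Let `κ` be a Markov kernel on a
Polish space `E` with invariant probability measure `μ`, let `π` be a coupling of `μ` and a
probability measure `ν`, and let `Pi` be a Markov kernel on `E × E` such that `Π((x,y),·)` is
a coupling of `κ(x,·)` and `κ(y,·)` for every `(x,y)`. Then
`sup_A |νκ(A) − μ(A)| ≤ ∫ Pi((x,y), {u ≠ v}) dπ(x,y)`. -/
theorem total_variation_invariant_le_coupling {E : Type*} [MetricSpace E] [CompleteSpace E]
    [TopologicalSpace.SeparableSpace E] [MeasurableSpace E] [BorelSpace E]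
    (κ : Kernel E E) [IsMarkovKernel κ]
    (μ : Measure E) [IsProbabilityMeasure μ] (hinv : μ.bind κ = μ)
    (ν : Measure E) [IsProbabilityMeasure ν]
    (π : Measure (E × E)) (hπ1 : π.map Prod.fst = μ) (hπ2 : π.map Prod.snd = ν)
    (Pi : Kernel (E × E) (E × E)) [IsMarkovKernel Pi]
    (hPi : ∀ p : E × E, (Pi p).map Prod.fst = κ p.1 ∧ (Pi p).map Prod.snd = κ p.2) :
    (⨆ (A : Set E) (_ : MeasurableSet A),
        max ((ν.bind κ) A - μ A) (μ A - (ν.bind κ) A)) ≤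
      ∫⁻ z, (Pi z) {w : E × E | w.1 ≠ w.2} ∂π := by
  have hD : MeasurableSet {w : E × E | w.1 ≠ w.2} :=
    (measurable_fst.stronglyMeasurable.measurableSet_eq_fun measurable_snd.stronglyMeasurable).compl
  refine iSup₂_le fun A hA => ?_
  have hAf : MeasurableSet (Prod.fst ⁻¹' A : Set (E × E)) := measurable_fst hA
  have hAs : MeasurableSet (Prod.snd ⁻¹' A : Set (E × E)) := measurable_snd hA
  have hν : (ν.bind κ) A = ∫⁻ z, Pi z (Prod.snd ⁻¹' A) ∂π := by
    rw [Measure.bind_apply hA κ.measurable.aemeasurable, ← hπ2,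
      lintegral_map (κ.measurable_coe hA) measurable_snd]
    refine lintegral_congr fun z => ?_
    rw [← (hPi z).2, Measure.map_apply measurable_snd hA]
  have hμ : μ A = ∫⁻ z, Pi z (Prod.fst ⁻¹' A) ∂π := by
    conv_lhs => rw [← hinv]
    rw [Measure.bind_apply hA κ.measurable.aemeasurable, ← hπ1,
      lintegral_map (κ.measurable_coe hA) measurable_fst]
    refine lintegral_congr fun z => ?_
    rw [← (hPi z).1, Measure.map_apply measurable_fst hA]
  have key : ∀ (s t : Set (E × E)), MeasurableSet s → MeasurableSet t →
      (∀ w : E × E, w ∈ s → w.1 = w.2 → w ∈ t) →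
      (∫⁻ z, Pi z s ∂π) - (∫⁻ z, Pi z t ∂π) ≤ ∫⁻ z, Pi z {w : E × E | w.1 ≠ w.2} ∂π := by
    intro s t hs ht hst
    rw [tsub_le_iff_right, ← lintegral_add_left (Pi.measurable_coe hD)]
    refine lintegral_mono fun z => ?_
    calc Pi z s ≤ Pi z ({w : E × E | w.1 ≠ w.2} ∪ t) := by
          refine measure_mono fun w hw => ?_
          by_cases h : w.1 = w.2
          · exact Or.inr (hst w hw h)
          · exact Or.inl h
      _ ≤ Pi z {w : E × E | w.1 ≠ w.2} + Pi z t := measure_union_le _ _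
  rw [hν, hμ]
  exact max_le (key _ _ hAs hAf fun w hw h => by simpa [← h] using hw)
    (key _ _ hAf hAs fun w hw h => by simpa [h] using hw)
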